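/- If A₁ and A₂ are two distinct maximal c-inseparable sets in a graph G, then A₁ ∩ A₂ induces a clique in G and has size at most c. -/
import Mathlib


variable {V : Type*}

/-- `C` separates `x` and `y` in `G`: neither endpoint is in `C` and every walk
from `x` to `y` meets `C`. -/
def Separates (G : SimpleGraph V) (C : Set V) (x y : V) : Prop :=
  x ∉ C ∧ y ∉ C ∧ ∀ p : G.Walk x y, ∃ z ∈ C, z ∈ p.support

/-- `x` and `y` are `c`-inseparable in `G`: no clique of size at most `c` separates them. -/
def CInsep (G : SimpleGraph V) (c : ℕ) (x y : V) : Prop :=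
  ∀ C : Set V, G.IsClique C → C.ncard ≤ c → ¬ Separates G C x y

/-- A set is `c`-inseparable if all its pairs of vertices are. -/
def InsepSet (G : SimpleGraph V) (c : ℕ) (A : Set V) : Prop :=
  ∀ x ∈ A, ∀ y ∈ A, CInsep G c x y

/-- Maximal `c`-inseparable set. -/
def MaxInsepSet (G : SimpleGraph V) (c : ℕ) (A : Set V) : Prop :=
  InsepSet G c A ∧ ∀ B, A ⊆ B → InsepSet G c B → B = A

/-- `C` separates `x` and `y` within the induced subgraph `G[A]`. -/
def SeparatesWithin (G : SimpleGraph V) (A C : Set V) (x y : V) : Prop :=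
  x ∈ A \ C ∧ y ∈ A \ C ∧
    ∀ p : G.Walk x y, (∀ z ∈ p.support, z ∈ A) → ∃ z ∈ C, z ∈ p.support

/-- `G[A]` is a `c`-atom: it has no clique separator of size at most `c`. -/
def AtomWithin (G : SimpleGraph V) (c : ℕ) (A : Set V) : Prop :=
  ¬ ∃ C : Set V, C ⊆ A ∧ G.IsClique C ∧ C.ncard ≤ c ∧ ∃ x y, SeparatesWithin G A C x y

/-- `G[A]` is a maximal `c`-atom of `G`. -/
def MaxAtom (G : SimpleGraph V) (c : ℕ) (A : Set V) : Prop :=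
  AtomWithin G c A ∧ ∀ B, A ⊆ B → AtomWithin G c B → B = A

/-- If `x` and `s` are not separated by `C` and both avoid `C`, there is a walk
between them avoiding `C`. -/
lemma exists_walk_avoiding {G : SimpleGraph V} {C : Set V} {x s : V}
    (h : ¬ Separates G C x s) (hx : x ∉ C) (hs : s ∉ C) :
    ∃ p : G.Walk x s, ∀ z ∈ p.support, z ∉ C := by
  unfold Separates at h
  push_neg at h
  obtain ⟨p, hp⟩ := h hx hs
  exact ⟨p, fun z hz hzC => (hp z hzC) hz⟩

/-- Key lemma: if every small clique misses some point of `A₁ ∩ A₂`, then the two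
maximal `c`-inseparable sets coincide. -/
lemma key [Fintype V] {G : SimpleGraph V} {c : ℕ} {A₁ A₂ : Set V}
    (h₁ : MaxInsepSet G c A₁) (h₂ : MaxInsepSet G c A₂)
    (H : ∀ C : Set V, G.IsClique C → C.ncard ≤ c → ∃ s ∈ A₁ ∩ A₂, s ∉ C) :
    A₁ = A₂ := by
  have hins : InsepSet G c (A₁ ∪ A₂) := by
    have main : ∀ u ∈ A₁, ∀ v ∈ A₂, CInsep G c u v := by
      intro u hu v hv C hC hcard hsep
      obtain ⟨s, hs, hsC⟩ := H C hC hcard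
      obtain ⟨huC, hvC, hwalk⟩ := hsep
      obtain ⟨p, hp⟩ := exists_walk_avoiding (h₁.1 u hu s hs.1 C hC hcard) huC hsC
      obtain ⟨q, hq⟩ := exists_walk_avoiding (h₂.1 s hs.2 v hv C hC hcard) hsC hvC
      obtain ⟨z, hzC, hz⟩ := hwalk (p.append q)
      rcases (SimpleGraph.Walk.mem_support_append_iff _ _).mp hz with h | h
      · exact hp z h hzC
      · exact hq z h hzC
    intro u hu v hv
    have symm : ∀ {a b : V}, CInsep G c a b → CInsep G c b a := by
      intro a b h C hC hcard ⟨hb, ha, hw⟩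
      exact h C hC hcard ⟨ha, hb, fun p => by
        obtain ⟨z, hz1, hz2⟩ := hw p.reverse
        exact ⟨z, hz1, by simpa using hz2⟩⟩
    rcases hu with hu | hu <;> rcases hv with hv | hv
    · exact h₁.1 u hu v hv
    · exact main u hu v hv
    · exact symm (main v hv u hu)
    · exact h₂.1 u hu v hv
  have e₁ := h₁.2 (A₁ ∪ A₂) Set.subset_union_left hins
  have e₂ := h₂.2 (A₁ ∪ A₂) Set.subset_union_right hins
  exact e₁.symm.trans e₂

/-- The intersection of two distinct maximal `c`-inseparable sets is a clique of
size at most `c`. -/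
theorem stmt3 [Fintype V] (G : SimpleGraph V) (c : ℕ) (A₁ A₂ : Set V)
    (h₁ : MaxInsepSet G c A₁) (h₂ : MaxInsepSet G c A₂) (hne : A₁ ≠ A₂) :
    G.IsClique (A₁ ∩ A₂) ∧ (A₁ ∩ A₂).ncard ≤ c := by
  constructor
  · intro x hx y hy hxy
    by_contra hadj
    apply hne
    apply key h₁ h₂
    intro C hC hcard
    by_cases hxC : x ∈ C
    · by_cases hyC : y ∈ C
      · exact absurd (hC hxC hyC hxy) hadj
      · exact ⟨y, hy, hyC⟩
    · exact ⟨x, hx, hxC⟩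
  · by_contra hcard
    push_neg at hcard
    apply hne
    apply key h₁ h₂
    intro C hC hCc
    by_contra h
    push_neg at h
    have hsub : A₁ ∩ A₂ ⊆ C := fun s hs => h s hs
    have := Set.ncard_le_ncard hsub (Set.toFinite C)
    omega
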